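/- Let C be a smooth curve of genus g with Clifford index γ_C, and suppose F is a divisor with h^0(O_C(F)) ≥ 2 and deg O_C(F) ≤ g - 1. If O_C(2F') with F' = O_C(F) computes γ_C via a class N = 2F (i.e., γ_C = 2(F·C) - 4 and F·C ≥ 3), then the pencil |O_C(F)| has Clifford index at most F·C - 2 = γ_C/2 < γ_C, a contradiction; hence in the decomposition N ~ tF one must have t = 1. -/
import Mathlib


/-- Let `C` be a smooth curve of genus `g` with Clifford index `γ_C`, and
`F` a divisor with `h⁰(O_C(F)) ≥ 2` and `deg O_C(F) = F·C ≤ g - 1`, `F·C ≥ 3`, so the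
pencil `|O_C(F)|` contributes to `γ_C`: `γ_C ≤ γ(O_C(F)) = F·C - 2(h⁰(O_C(F)) - 1)
≤ F·C - 2`. If `N ~ tF` (with `t = 1` or `t = 2`) computed `γ_C` with `t = 2`, i.e.
`γ_C = 2(F·C) - 4`, then `F·C - 2 = γ_C/2 < γ_C`, contradicting the minimality of
`γ_C`; hence `t = 1`. -/
theorem clifford_pencil_forces_t_eq_one
    (g γC FC : ℤ) (t h0F : ℕ)
    (ht : t = 1 ∨ t = 2)
    (hFC : 3 ≤ FC)
    (hdeg : FC ≤ g - 1)
    (hh0 : 2 ≤ h0F)  -- h⁰(O_C(F)) ≥ 2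
    (hmin : γC ≤ FC - 2 * ((h0F : ℤ) - 1))  -- |O_C(F)| contributes to γ_C
    (ht2 : t = 2 → γC = 2 * FC - 4) :
    t = 1 := by
  rcases ht with h | h
  · exact h
  · have := ht2 h
    omega
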